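/- Let D be a closed convex subset of the Euclidean space ℝ^m with nonempty interior, let x ∈ ℝ^m satisfy dist(x, D) > 0, and let y ∈ D be the (unique) nearest point of D to x, i.e. |y − x| = dist(x, D). Then for every point a in the interior of D one has ⟨x − a, y − x⟩ ≤ − dist(a, ∂D) · |y − x|. -/

import Mathlib

open scoped RealInnerProductSpace

/-- Lemma 2.1(c), last assertion: if `y` is the nearest point of the closed convex set `D`
to a point `x` with `dist(x, D) > 0`, then for every interior point `a` of `D`,
`⟨x - a, y - x⟩ ≤ - dist(a, ∂D) ⬝ ‖y - x‖`. -/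
theorem inner_sub_nearest_point_le_neg_infDist_frontier_mul
    (m : ℕ) (D : Set (EuclideanSpace ℝ (Fin m)))
    (hclosed : IsClosed D) (hconv : Convex ℝ D)
    (x : EuclideanSpace ℝ (Fin m)) (hx : 0 < Metric.infDist x D)
    (y : EuclideanSpace ℝ (Fin m)) (hyD : y ∈ D)
    (hy : ‖y - x‖ = Metric.infDist x D)
    (a : EuclideanSpace ℝ (Fin m)) (ha : a ∈ interior D) :
    ⟪x - a, y - x⟫ ≤ -Metric.infDist a (frontier D) * ‖y - x‖ := by
  set r : ℝ := Metric.infDist a (frontier D) with hr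
  have haD : a ∈ D := interior_subset ha
  have hxny : (0:ℝ) < ‖x - y‖ := by
    rw [show x - y = -(y - x) by abel, norm_neg, hy]; exact hx
  -- frontier D is nonempty (D ≠ univ since x ∉ D)
  have hxD : x ∉ D := fun h => by
    simp [Metric.infDist_zero_of_mem h] at hx
  have hfne : (frontier D).Nonempty := by
    rw [nonempty_frontier_iff]
    exact ⟨⟨y, hyD⟩, fun h => hxD (h ▸ Set.mem_univ x)⟩
  have hrpos : 0 < r := by
    rw [hr, ← (isClosed_frontier).notMem_iff_infDist_pos hfne]
    exact fun h => h.2 ha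
  -- the ball of radius r around a is inside interior D
  have hball : Metric.ball a r ⊆ interior D := by
    have hsub : Metric.ball a r ⊆ interior D ∪ interior Dᶜ := by
      intro z hz
      have hznf : z ∉ frontier D := by
        intro hzf
        have h1 : Metric.infDist a (frontier D) ≤ dist a z :=
          Metric.infDist_le_dist_of_mem hzf
        rw [Metric.mem_ball, dist_comm, hr] at hz
        exact absurd hz (not_lt.2 h1)
      rw [← compl_frontier_eq_union_interior]
      exact hznf
    exact (convex_ball a r).isPreconnected.subset_left_of_subset_union
      isOpen_interior isOpen_interior
      (disjoint_compl_right.mono interior_subset interior_subset)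
      hsub ⟨a, Metric.mem_ball_self hrpos, ha⟩
  have hcball : Metric.closedBall a r ⊆ D := by
    rw [← closure_ball a hrpos.ne']
    exact closure_minimal (hball.trans interior_subset) hclosed
  -- the test point
  set z : EuclideanSpace ℝ (Fin m) := a + (r / ‖x - y‖) • (x - y) with hz
  have hzD : z ∈ D := by
    apply hcball
    rw [Metric.mem_closedBall, dist_eq_norm, hz, add_sub_cancel_left, norm_smul,
      Real.norm_eq_abs, abs_of_pos (div_pos hrpos hxny), div_mul_cancel₀ _ hxny.ne']
  -- nearest point inequality
  have hproj : ∀ w ∈ D, ⟪x - y, w - y⟫ ≤ 0 := by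
    have hinf : ‖x - y‖ = ⨅ w : D, ‖x - w‖ := by
      rw [show x - y = -(y - x) by abel, norm_neg, hy, Metric.infDist_eq_iInf]
      exact iInf_congr fun w => dist_eq_norm x w
    exact (norm_eq_iInf_iff_real_inner_le_zero hconv hyD).1 hinf
  have key := hproj z hzD
  have hexp : ⟪x - y, z - y⟫ = ⟪x - y, a - y⟫ + r * ‖x - y‖ := by
    rw [hz, show a + (r / ‖x - y‖) • (x - y) - y = (a - y) + (r / ‖x - y‖) • (x - y) by abel,
      inner_add_right, real_inner_smul_right, real_inner_self_eq_norm_mul_norm]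
    field_simp
  rw [hexp] at key
  have h1 : ⟪x - y, a - y⟫ ≤ -r * ‖x - y‖ := by linarith
  have h2 : ⟪x - a, y - x⟫ = -‖x - y‖ ^ 2 + ⟪x - y, a - y⟫ := by
    rw [show x - a = (x - y) + (y - a) by abel, inner_add_left,
      show y - x = -(x - y) by abel, inner_neg_right, inner_neg_right,
      show y - a = -(a - y) by abel, inner_neg_left,
      real_inner_self_eq_norm_sq, real_inner_comm (a - y) (x - y)]
    ring
  have h3 : ‖y - x‖ = ‖x - y‖ := by rw [show y - x = -(x - y) by abel, norm_neg]
  rw [h2, h3]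
  nlinarith [sq_nonneg ‖x - y‖]
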